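/- Every non-constant polynomial P on ℝ^n satisfies the s-cone condition with s = deg P; that is, there exist constants C > 0, c₁ > 0, 0 < r₀ < 1 and a sequence of points x_i ∈ ℝ^n with |x_i| ≥ 1 and |x_i| → ∞ such that |P(x)| ≤ C·(|x|+1)^{deg P} for all x ∈ ℝ^n, and for every i and every x ∈ B_{r₀|x_i|}(x_i) one has |P(x)| ≥ c₁·|x|^{deg P}. -/

import Mathlib

open MeasureTheory Real Filter

/-- The s-cone condition: `|ψ(x)| ≤ C(|x|+1)^s` globally, and along a sequence `x_i` with
`|x_i| ≥ 1`, `|x_i| → ∞`, one has `|ψ(x)| ≥ c₁|x|^s` on the balls `B_{r₀|x_i|}(x_i)`. -/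
def SCone (n : ℕ) (ψ : EuclideanSpace ℝ (Fin n) → ℝ) (s : ℝ) : Prop :=
  ∃ (C c₁ r₀ : ℝ) (xs : ℕ → EuclideanSpace ℝ (Fin n)),
    0 < C ∧ 0 < c₁ ∧ 0 < r₀ ∧ r₀ < 1 ∧
    (∀ i, 1 ≤ ‖xs i‖) ∧ Filter.Tendsto (fun i => ‖xs i‖) Filter.atTop Filter.atTop ∧
    (∀ x, |ψ x| ≤ C * (‖x‖ + 1) ^ s) ∧
    (∀ i, ∀ x ∈ Metric.ball (xs i) (r₀ * ‖xs i‖), c₁ * ‖x‖ ^ s ≤ |ψ x|)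

open MvPolynomial Finset in
private lemma coord_abs_le_norm {n : ℕ} (x : EuclideanSpace ℝ (Fin n)) (i : Fin n) :
    |x i| ≤ ‖x‖ := by
  rw [EuclideanSpace.norm_eq]
  have h1 : |x i| = Real.sqrt (‖x i‖ ^ 2) := by
    rw [Real.sqrt_sq_eq_abs, Real.norm_eq_abs, abs_abs]
  rw [h1]
  apply Real.sqrt_le_sqrt
  exact Finset.single_le_sum (fun j _ => sq_nonneg ‖x j‖) (Finset.mem_univ i)

open MvPolynomial Finset in
private lemma eval_homog_smul {n : ℕ} {Q : MvPolynomial (Fin n) ℝ} {d : ℕ}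
    (h : Q.IsHomogeneous d) (r : ℝ) (x : Fin n → ℝ) :
    MvPolynomial.eval (fun i => r * x i) Q = r ^ d * MvPolynomial.eval x Q := by
  rw [eval_eq', eval_eq', Finset.mul_sum]
  refine Finset.sum_congr rfl fun m hm => ?_
  have hdeg : ∑ i, m i = d := by
    have h1 : Finsupp.degree m = d := by
      rw [Finsupp.degree_eq_weight_one]
      exact h (mem_support_iff.mp hm)
    rw [← h1, Finsupp.degree]
    exact (Finset.sum_subset (Finset.subset_univ _)
      (fun i _ hi => Finsupp.notMem_support_iff.mp hi)).symm
  have : ∏ i, (r * x i) ^ m i = r ^ d * ∏ i, x i ^ m i := by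
    rw [← hdeg]
    simp_rw [mul_pow]
    rw [Finset.prod_mul_distrib, Finset.prod_pow_eq_pow_sum]
  rw [this]; ring

open MvPolynomial Finset in
private lemma eval_abs_le {n : ℕ} (p : MvPolynomial (Fin n) ℝ) (x : EuclideanSpace ℝ (Fin n)) :
    |MvPolynomial.eval (fun i => x i) p| ≤
      (∑ m ∈ p.support, |MvPolynomial.coeff m p|) * (‖x‖ + 1) ^ p.totalDegree := by
  rw [eval_eq']
  calc |∑ m ∈ p.support, coeff m p * ∏ i, x i ^ m i|
      ≤ ∑ m ∈ p.support, |coeff m p * ∏ i, x i ^ m i| := Finset.abs_sum_le_sum_abs _ _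
    _ ≤ ∑ m ∈ p.support, |coeff m p| * (‖x‖ + 1) ^ p.totalDegree := by
        refine Finset.sum_le_sum fun m hm => ?_
        rw [abs_mul]
        refine mul_le_mul_of_nonneg_left ?_ (abs_nonneg _)
        calc |∏ i, x i ^ m i| ≤ ∏ i, |x i| ^ m i := by
              rw [abs_prod]
              refine Finset.prod_le_prod (fun i _ => abs_nonneg _) fun i _ => ?_
              rw [abs_pow]
          _ ≤ ∏ i, (‖x‖ + 1) ^ m i := by
              refine Finset.prod_le_prod (fun i _ => by positivity) fun i _ => ?_
              exact pow_le_pow_left₀ (abs_nonneg _)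
                ((coord_abs_le_norm x i).trans (by linarith [norm_nonneg x])) _
          _ = (‖x‖ + 1) ^ ∑ i, m i := Finset.prod_pow_eq_pow_sum _ _ _
          _ ≤ (‖x‖ + 1) ^ p.totalDegree := by
              apply pow_le_pow_right₀ (by linarith [norm_nonneg x])
              have := MvPolynomial.le_totalDegree hm
              rw [Finsupp.sum] at this
              refine le_trans (le_of_eq ?_) this
              exact (Finset.sum_subset (Finset.subset_univ m.support)
                (fun i _ hi => Finsupp.notMem_support_iff.mp hi)).symm
    _ = _ := by rw [← Finset.sum_mul]

open MvPolynomial Finset in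
theorem polynomial_satisfies_scone (n : ℕ) (P : MvPolynomial (Fin n) ℝ)
    (hP : 0 < P.totalDegree) :
    SCone n (fun x => MvPolynomial.eval (fun i => x i) P) (P.totalDegree : ℝ) := by
  set d := P.totalDegree with hd
  set Q := homogeneousComponent d P with hQdef
  set Rp := P - Q with hRdef
  have hPne : P ≠ 0 := by
    intro h
    rw [hd, h, MvPolynomial.totalDegree_zero] at hP
    exact lt_irrefl 0 hP
  have hQhom : Q.IsHomogeneous d := homogeneousComponent_isHomogeneous d P
  -- Q ≠ 0
  obtain ⟨m, hm, hmd⟩ := Finset.exists_mem_eq_sup P.support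
    (Finset.nonempty_iff_ne_empty.mpr (by rwa [Ne, MvPolynomial.support_eq_empty])) (fun m : (Fin n →₀ ℕ) => m.sum fun _ e => e)
  have hmdeg : Finsupp.degree m = d := by
    rw [hd, MvPolynomial.totalDegree, hmd]
    rfl
  have hQne : Q ≠ 0 := by
    intro h
    have : coeff m Q = coeff m P := by
      rw [hQdef, coeff_homogeneousComponent, if_pos hmdeg]
    rw [h] at this
    exact (mem_support_iff.mp hm) (by simpa using this.symm)
  -- a point where the top form doesn't vanish
  obtain ⟨v₀, hv₀⟩ : ∃ v₀ : Fin n → ℝ, eval v₀ Q ≠ 0 := by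
    by_contra h
    push_neg at h
    exact hQne (MvPolynomial.funext fun x => by simp [h x])
  -- pass to Euclidean space
  set V₀ : EuclideanSpace ℝ (Fin n) := (WithLp.equiv 2 (Fin n → ℝ)).symm v₀ with hV₀def
  have hV₀coord : ∀ i, V₀ i = v₀ i := fun i => rfl
  have hV₀ne : V₀ ≠ 0 := by
    intro h
    apply hv₀
    have hv0 : v₀ = fun _ => (0:ℝ) := by
      funext i; rw [← hV₀coord i, h]; rfl
    rw [hv0]
    have := eval_homog_smul hQhom 0 v₀
    simp only [zero_mul] at this
    rw [this, zero_pow hP.ne', zero_mul]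
  set ν : ℝ := ‖V₀‖ with hν
  have hνpos : 0 < ν := norm_pos_iff.mpr hV₀ne
  set v : EuclideanSpace ℝ (Fin n) := ν⁻¹ • V₀ with hvdef
  have hvnorm : ‖v‖ = 1 := norm_smul_inv_norm hV₀ne
  set f : EuclideanSpace ℝ (Fin n) → ℝ := fun x => eval (fun i => x i) Q with hfdef
  have hf_cont : Continuous f := by
    apply (MvPolynomial.continuous_eval (p := Q)).comp
    exact continuous_pi fun i => (continuous_apply i).comp (PiLp.continuous_ofLp 2 _)
  have hfv_eq : f v = ν⁻¹ ^ d * eval v₀ Q := by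
    have hco : (fun i => v i) = fun i => ν⁻¹ * v₀ i := by
      funext i
      rw [hvdef]
      simp [hV₀coord i]
    show eval (fun i => v i) Q = _
    rw [hco]
    exact eval_homog_smul hQhom _ _
  have hfv : f v ≠ 0 := by
    rw [hfv_eq]
    exact mul_ne_zero (pow_ne_zero _ (inv_ne_zero hνpos.ne')) hv₀
  -- choice of the cone opening
  set c : ℝ := |f v| / 2 with hc
  have hfvpos : 0 < |f v| := abs_pos.mpr hfv
  have hcpos : 0 < c := by rw [hc]; linarith
  obtain ⟨ε, hεpos, hεball⟩ : ∃ ε > 0, ∀ y ∈ Metric.ball v ε, c < |f y| := by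
    have hopen : IsOpen {y | c < |f y|} := isOpen_lt continuous_const hf_cont.abs
    have hvmem : v ∈ {y | c < |f y|} := by
      simp only [Set.mem_setOf_eq, hc]; linarith
    obtain ⟨ε, hε, hball⟩ := Metric.isOpen_iff.mp hopen v hvmem
    exact ⟨ε, hε, fun y hy => hball hy⟩
  set r₀ : ℝ := min (ε / 2) (1 / 2) with hr₀
  have hr₀pos : 0 < r₀ := lt_min (by linarith) (by norm_num)
  have hr₀lt : r₀ < 1 := lt_of_le_of_lt (min_le_right _ _) (by norm_num)
  have hr₀half : r₀ ≤ 1 / 2 := min_le_right _ _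
  have hr₀ε : r₀ < ε := lt_of_le_of_lt (min_le_left _ _) (by linarith)
  -- degree bound on the remainder
  have hRpdeg : Rp.totalDegree ≤ d - 1 := by
    rw [MvPolynomial.totalDegree]
    apply Finset.sup_le
    intro m' hm'
    by_contra hgt
    push_neg at hgt
    have hge : d ≤ m'.sum fun _ e => e := by omega
    have hdeg' : Finsupp.degree m' = m'.sum fun _ e => e := rfl
    have hcz : coeff m' Rp ≠ 0 := mem_support_iff.mp hm'
    apply hcz
    rw [hRdef, MvPolynomial.coeff_sub, hQdef, coeff_homogeneousComponent]
    rcases eq_or_lt_of_le hge with heq | hlt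
    · rw [if_pos (by rw [hdeg']; exact heq.symm)]; ring
    · rw [if_neg (by rw [hdeg']; omega)]
      have hz : coeff m' P = 0 := by
        by_contra hco
        have := MvPolynomial.le_totalDegree (mem_support_iff.mpr hco)
        rw [← hd] at this
        omega
      rw [hz]; ring
  set C₂ : ℝ := ∑ m' ∈ Rp.support, |coeff m' Rp| with hC₂
  have hC₂nn : 0 ≤ C₂ := Finset.sum_nonneg fun _ _ => abs_nonneg _
  have hRbound : ∀ x : EuclideanSpace ℝ (Fin n),
      |eval (fun j => x j) Rp| ≤ C₂ * (‖x‖ + 1) ^ (d - 1) := by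
    intro x
    refine (eval_abs_le Rp x).trans ?_
    refine mul_le_mul_of_nonneg_left ?_ hC₂nn
    exact pow_le_pow_right₀ (by linarith [norm_nonneg x]) hRpdeg
  set K : ℝ := C₂ * 3 ^ (d - 1) with hK
  have hKnn : 0 ≤ K := by positivity
  set T : ℝ := 1 + 2 * K / c with hT
  have hT1 : 1 ≤ T := by
    have : 0 ≤ 2 * K / c := by positivity
    rw [hT]; linarith
  set xs : ℕ → EuclideanSpace ℝ (Fin n) := fun i => (T + i) • v with hxs
  have hTi : ∀ i : ℕ, 1 ≤ T + (i : ℝ) := fun i => by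
    have : (0:ℝ) ≤ i := Nat.cast_nonneg i
    linarith
  have hxsnorm : ∀ i, ‖xs i‖ = T + i := by
    intro i
    rw [hxs]
    rw [norm_smul, hvnorm, mul_one, Real.norm_eq_abs, abs_of_nonneg (by linarith [hTi i])]
  set CP : ℝ := (∑ m' ∈ P.support, |coeff m' P|) + 1 with hCP
  have hsumnn : 0 ≤ ∑ m' ∈ P.support, |coeff m' P| := Finset.sum_nonneg fun _ _ => abs_nonneg _
  set c₁ : ℝ := c / 2 / 2 ^ d with hc₁
  have hc₁pos : 0 < c₁ := by rw [hc₁]; positivity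
  have hfapp : ∀ z : EuclideanSpace ℝ (Fin n), f z = eval (fun j => z j) Q := fun z => by
    rw [hfdef]
  clear_value d Q Rp V₀ ν v f c r₀ C₂ K T xs CP c₁
  refine ⟨CP, c₁, r₀, xs, by rw [hCP]; linarith, hc₁pos, hr₀pos, hr₀lt, ?_, ?_, ?_, ?_⟩
  · intro i; rw [hxsnorm i]; exact hTi i
  · have h1 : Tendsto (fun i : ℕ => T + (i : ℝ)) atTop atTop :=
      tendsto_atTop_add_const_left atTop T tendsto_natCast_atTop_atTop
    exact h1.congr fun i => (hxsnorm i).symm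
  · intro x
    rw [Real.rpow_natCast]
    calc |eval (fun j => x j) P|
        ≤ (∑ m' ∈ P.support, |coeff m' P|) * (‖x‖ + 1) ^ d := by
          rw [hd]; exact eval_abs_le P x
      _ ≤ CP * (‖x‖ + 1) ^ d := by
          refine mul_le_mul_of_nonneg_right ?_ (by positivity)
          rw [hCP]; linarith
  · intro i x hx
    set t : ℝ := T + i with ht
    have ht1 : 1 ≤ t := hTi i
    have htpos : 0 < t := by linarith
    clear_value t
    rw [hxsnorm i, ← ht] at hx
    have hdist : ‖x - xs i‖ < r₀ * t := by rwa [Metric.mem_ball, dist_eq_norm] at hx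
    set y : EuclideanSpace ℝ (Fin n) := t⁻¹ • x with hy
    clear_value y
    have hxy : x = t • y := by rw [hy, smul_smul, mul_inv_cancel₀ htpos.ne', one_smul]
    have hyv : y ∈ Metric.ball v r₀ := by
      rw [Metric.mem_ball, dist_eq_norm]
      have heq : y - v = t⁻¹ • (x - xs i) := by
        rw [hy, hxs, smul_sub, smul_smul, ← ht, inv_mul_cancel₀ htpos.ne', one_smul]
      rw [heq, norm_smul, Real.norm_eq_abs, abs_of_pos (inv_pos.mpr htpos)]
      calc t⁻¹ * ‖x - xs i‖ < t⁻¹ * (r₀ * t) :=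
            mul_lt_mul_of_pos_left hdist (inv_pos.mpr htpos)
        _ = r₀ := by field_simp
    have hfy : c < |f y| := hεball y (Metric.ball_subset_ball hr₀ε.le hyv)
    have hQx : eval (fun j => x j) Q = t ^ d * f y := by
      have hco : (fun j => x j) = fun j => t * y j := by
        funext j; rw [hxy]; simp
      rw [hco, hfapp y]
      exact eval_homog_smul hQhom _ _
    have hPx : eval (fun j => x j) P = eval (fun j => x j) Q + eval (fun j => x j) Rp := by
      rw [hRdef, map_sub]; ring
    have hxle : ‖x‖ ≤ 2 * t := by
      have h1 : ‖x‖ - ‖xs i‖ ≤ ‖x - xs i‖ := norm_sub_norm_le x (xs i)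
      have h2 : r₀ * t ≤ 1 / 2 * t := mul_le_mul_of_nonneg_right hr₀half htpos.le
      have h3 := hxsnorm i
      rw [← ht] at h3
      rw [h3] at h1
      have h4 : ‖x‖ ≤ t + r₀ * t := by linarith [hdist]
      linarith [h4, h2, htpos]
    have hRx : |eval (fun j => x j) Rp| ≤ K * t ^ (d - 1) := by
      refine (hRbound x).trans ?_
      have h3 : (‖x‖ + 1) ^ (d - 1) ≤ (3 * t) ^ (d - 1) :=
        pow_le_pow_left₀ (by positivity) (by linarith) _
      calc C₂ * (‖x‖ + 1) ^ (d - 1) ≤ C₂ * (3 * t) ^ (d - 1) :=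
            mul_le_mul_of_nonneg_left h3 hC₂nn
        _ = K * t ^ (d - 1) := by rw [hK, mul_pow]; ring
    have htd : t ^ d = t * t ^ (d - 1) := by
      conv_lhs => rw [show d = (d - 1) + 1 by omega]
      rw [pow_succ]; ring
    have hKt : K * t ^ (d - 1) ≤ c / 2 * t ^ d := by
      have htK : 2 * K / c ≤ t := by
        have : (0:ℝ) ≤ i := Nat.cast_nonneg i
        rw [ht, hT]; linarith
      have hKle : K ≤ c / 2 * t := by
        have h4 : c / 2 * (2 * K / c) = K := by field_simp
        calc K = c / 2 * (2 * K / c) := h4.symm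
          _ ≤ c / 2 * t := mul_le_mul_of_nonneg_left htK (by linarith)
      calc K * t ^ (d - 1) ≤ (c / 2 * t) * t ^ (d - 1) :=
            mul_le_mul_of_nonneg_right hKle (pow_nonneg htpos.le _)
        _ = c / 2 * t ^ d := by rw [htd]; ring
    have hQabs : c * t ^ d ≤ |eval (fun j => x j) Q| := by
      rw [hQx, abs_mul, abs_pow, abs_of_pos htpos]
      calc c * t ^ d ≤ |f y| * t ^ d :=
            mul_le_mul_of_nonneg_right hfy.le (pow_nonneg htpos.le _)
        _ = t ^ d * |f y| := mul_comm _ _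
    have habs : c * t ^ d - K * t ^ (d - 1) ≤ |eval (fun j => x j) P| := by
      rw [hPx]
      have h5 : |eval (fun j => x j) Q| - |eval (fun j => x j) Rp| ≤
          |eval (fun j => x j) Q + eval (fun j => x j) Rp| := by
        have h6 := abs_sub_abs_le_abs_sub (eval (fun j => x j) Q)
          (-(eval (fun j => x j) Rp))
        rw [abs_neg, sub_neg_eq_add] at h6
        exact h6
      linarith
    show c₁ * ‖x‖ ^ ((d : ℕ) : ℝ) ≤ |eval (fun j => x j) P|
    rw [Real.rpow_natCast]
    have hxd : ‖x‖ ^ d ≤ (2 * t) ^ d := pow_le_pow_left₀ (norm_nonneg x) hxle d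
    calc c₁ * ‖x‖ ^ d ≤ c₁ * (2 * t) ^ d := mul_le_mul_of_nonneg_left hxd hc₁pos.le
      _ = c / 2 * t ^ d := by rw [hc₁, mul_pow]; field_simp
      _ ≤ c * t ^ d - K * t ^ (d - 1) := by linarith
      _ ≤ |eval (fun j => x j) P| := habs
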